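/- Let n ≥ 1, let 1 ≤ k < n, and let λ_1 ≥ λ_2 ≥ … ≥ λ_n ≥ 0 be a nonincreasing sequence of nonnegative reals (the eigenvalues of an n×n PSD matrix A in nonincreasing order, so that ‖A − A_k‖_F² = Σ_{i=k+1}^n λ_i² where A_k is the best rank-k approximation of A, and Tr(A) = Σ_{i=1}^n λ_i). Then sqrt(Σ_{i=k+1}^n λ_i²) ≤ (1/(2√k)) Σ_{i=1}^n λ_i. -/
import Mathlib


open Finset

/-- **Eigenvalue-tail bound for the best rank-`k` approximation of a PSD matrix.**
If `lam 0 ≥ lam 1 ≥ … ≥ lam (n-1) ≥ 0` are the eigenvalues of an `n × n` PSD matrix in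
nonincreasing order and `1 ≤ k < n`, then
`sqrt (∑_{i=k}^{n-1} (lam i)²) ≤ (1/(2√k)) ∑_{i=0}^{n-1} lam i`,
i.e. `‖A − A_k‖_F ≤ Tr(A)/(2√k)`. -/
theorem psd_tail_frobenius_le_trace
    {n k : ℕ} (hn : 1 ≤ n) (hk : 1 ≤ k) (hkn : k < n)
    (lam : ℕ → ℝ)
    (hmono : ∀ i j, i ≤ j → j < n → lam j ≤ lam i)
    (hnonneg : ∀ i, i < n → 0 ≤ lam i) :
    Real.sqrt (∑ i ∈ Finset.Ico k n, lam i ^ 2)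
      ≤ (1 / (2 * Real.sqrt k)) * ∑ i ∈ Finset.range n, lam i := by
  set a := ∑ i ∈ Finset.range k, lam i with ha
  set b := ∑ i ∈ Finset.Ico k n, lam i with hb
  have hsplit : ∑ i ∈ Finset.range n, lam i = a + b :=
    (Finset.sum_range_add_sum_Ico lam hkn.le).symm
  have hc : 0 ≤ lam k := hnonneg k hkn
  have hka : (k : ℝ) * lam k ≤ a := by
    have : ∑ i ∈ Finset.range k, lam k ≤ a := by
      apply Finset.sum_le_sum
      intro i hi
      exact hmono i k (Finset.mem_range.mp hi).le hkn
    simpa using this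
  have hbnn : 0 ≤ b := Finset.sum_nonneg fun i hi =>
    hnonneg i (Finset.mem_Ico.mp hi).2
  have htail : ∑ i ∈ Finset.Ico k n, lam i ^ 2 ≤ lam k * b := by
    rw [hb, Finset.mul_sum]
    apply Finset.sum_le_sum
    intro i hi
    obtain ⟨h1, h2⟩ := Finset.mem_Ico.mp hi
    have := hmono k i h1 h2
    have hinn := hnonneg i h2
    nlinarith
  have hkpos : (0 : ℝ) < k := by exact_mod_cast hk
  have hsq : Real.sqrt k ^ 2 = k := Real.sq_sqrt hkpos.le
  have hsqpos : 0 < Real.sqrt k := Real.sqrt_pos.mpr hkpos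
  have key : ∑ i ∈ Finset.Ico k n, lam i ^ 2
      ≤ ((1 / (2 * Real.sqrt k)) * (a + b)) ^ 2 := by
    have h2 : (2 * Real.sqrt k) ^ 2 = 4 * (k : ℝ) := by rw [mul_pow, hsq]; norm_num
    rw [mul_pow, div_pow, one_pow, h2, div_mul_eq_mul_div, one_mul,
      le_div_iff₀ (by positivity)]
    nlinarith [sq_nonneg (a - b), mul_le_mul_of_nonneg_left hka hbnn,
      mul_le_mul_of_nonneg_right htail hkpos.le]
  calc Real.sqrt (∑ i ∈ Finset.Ico k n, lam i ^ 2)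
      ≤ Real.sqrt (((1 / (2 * Real.sqrt k)) * (a + b)) ^ 2) := Real.sqrt_le_sqrt key
    _ = (1 / (2 * Real.sqrt k)) * (a + b) := by
        have hann : 0 ≤ a := Finset.sum_nonneg fun i hi =>
          hnonneg i ((Finset.mem_range.mp hi).trans hkn)
        exact Real.sqrt_sq (mul_nonneg (by positivity) (by linarith))
    _ = (1 / (2 * Real.sqrt k)) * ∑ i ∈ Finset.range n, lam i := by rw [hsplit]
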